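/- arXiv:2107.04884 — 2 statements merged into one kernel-verified Lean document; each statement's English description precedes it below -/
import Mathlib

section
/- Let n ≥ 5. For the Riesz kernels on ℝⁿ, the semigroup (composition) identity holds: ∫_{ℝⁿ} |x−z|^{2−n} |z−y|^{2−n} dz = (π^{n/2} Γ(n/2 − 2) / Γ(n/2 − 1)²) · |x−y|^{4−n} for all x ≠ y in ℝⁿ. -/
set_option maxHeartbeats 1000000

open MeasureTheory Real Set
open scoped ENNReal

namespace RieszCompositionAux

lemma lint_gamma {q r : ℝ} (hq : 0 < q) (hr : 0 < r) :
    ∫⁻ t in Ioi (0:ℝ), ENNReal.ofReal (t ^ (q - 1) * rexp (-(r * t)))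
      = ENNReal.ofReal ((1 / r) ^ q * Gamma q) := by
  have hint : IntegrableOn (fun t : ℝ => t ^ (q - 1) * rexp (-(r * t))) (Ioi 0) := by
    have h := integrableOn_rpow_mul_exp_neg_mul_rpow (p := 1) (s := q - 1)
      (by linarith) one_pos hr
    simpa [Real.rpow_one, neg_mul] using h
  have hnn : 0 ≤ᵐ[volume.restrict (Ioi (0:ℝ))] fun t : ℝ => t ^ (q - 1) * rexp (-(r * t)) := by
    filter_upwards [self_mem_ae_restrict measurableSet_Ioi] with t ht
    have : (0:ℝ) < t := ht
    positivity
  rw [← ofReal_integral_eq_lintegral_ofReal hint hnn,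
    integral_rpow_mul_exp_neg_mul_Ioi hq hr]

lemma integrable_gauss {n : ℕ} {b : ℝ} (hb : 0 < b) :
    Integrable (fun v : EuclideanSpace ℝ (Fin n) => rexp (-(b * ‖v‖ ^ 2))) := by
  have h := (GaussianFourier.integrable_cexp_neg_mul_sq_norm_add
      (b := (b:ℂ)) (by simpa using hb) 0 (0 : EuclideanSpace ℝ (Fin n))).norm
  refine h.congr ?_
  filter_upwards with v
  rw [Complex.norm_exp]
  congr 1
  have h1 : (-(b:ℂ) * (‖v‖:ℂ) ^ 2 + 0 * ((inner ℝ (0 : EuclideanSpace ℝ (Fin n)) v : ℝ) : ℂ))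
      = ((-(b * ‖v‖ ^ 2) : ℝ) : ℂ) := by push_cast; ring
  rw [h1, Complex.ofReal_re]

lemma lint_gauss {n : ℕ} {b : ℝ} (hb : 0 < b) :
    ∫⁻ v : EuclideanSpace ℝ (Fin n), ENNReal.ofReal (rexp (-(b * ‖v‖ ^ 2)))
      = ENNReal.ofReal ((π / b) ^ ((n:ℝ) / 2)) := by
  rw [← ofReal_integral_eq_lintegral_ofReal (integrable_gauss hb)
      (Filter.Eventually.of_forall fun v => (exp_pos _).le)]
  congr 1
  have := GaussianFourier.integral_rexp_neg_mul_sq_norm (V := EuclideanSpace ℝ (Fin n)) hb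
  rw [finrank_euclideanSpace_fin] at this
  simpa [neg_mul] using this

lemma lint_gauss_two {n : ℕ} (w : EuclideanSpace ℝ (Fin n)) {a b : ℝ}
    (ha : 0 < a) (hb : 0 < b) :
    ∫⁻ z : EuclideanSpace ℝ (Fin n),
        ENNReal.ofReal (rexp (-(a * ‖w - z‖ ^ 2 + b * ‖z‖ ^ 2)))
      = ENNReal.ofReal ((π / (a + b)) ^ ((n:ℝ) / 2)
          * rexp (-(a * b / (a + b) * ‖w‖ ^ 2))) := by
  have hab : 0 < a + b := by linarith
  have key : ∀ z : EuclideanSpace ℝ (Fin n),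
      a * ‖w - z‖ ^ 2 + b * ‖z‖ ^ 2
        = (a + b) * ‖z - (a / (a + b)) • w‖ ^ 2 + a * b / (a + b) * ‖w‖ ^ 2 := by
    intro z
    have h1 : ‖w - z‖ ^ 2 = ‖w‖ ^ 2 - 2 * inner ℝ w z + ‖z‖ ^ 2 := norm_sub_sq_real w z
    have h2 : ‖z - (a / (a + b)) • w‖ ^ 2
        = ‖z‖ ^ 2 - 2 * (a / (a + b) * inner ℝ w z) + (a / (a + b)) ^ 2 * ‖w‖ ^ 2 := by
      rw [norm_sub_sq_real, real_inner_smul_right, norm_smul, real_inner_comm]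
      rw [mul_pow, norm_eq_abs, sq_abs]
    rw [h1, h2]
    field_simp
    ring
  have step1 : ∀ z : EuclideanSpace ℝ (Fin n),
      ENNReal.ofReal (rexp (-(a * ‖w - z‖ ^ 2 + b * ‖z‖ ^ 2)))
        = ENNReal.ofReal (rexp (-((a + b) * ‖z - (a / (a + b)) • w‖ ^ 2)))
          * ENNReal.ofReal (rexp (-(a * b / (a + b) * ‖w‖ ^ 2))) := by
    intro z
    rw [← ENNReal.ofReal_mul (exp_pos _).le, ← Real.exp_add, key z]
    ring_nf
  simp_rw [step1]
  rw [lintegral_mul_const' _ _ ENNReal.ofReal_ne_top]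
  have htrans : ∫⁻ z : EuclideanSpace ℝ (Fin n),
      ENNReal.ofReal (rexp (-((a + b) * ‖z - (a / (a + b)) • w‖ ^ 2)))
        = ∫⁻ z : EuclideanSpace ℝ (Fin n),
          ENNReal.ofReal (rexp (-((a + b) * ‖z‖ ^ 2))) := by
    simpa [sub_eq_add_neg] using lintegral_add_right_eq_self
      (fun z : EuclideanSpace ℝ (Fin n) =>
        ENNReal.ofReal (rexp (-((a + b) * ‖z‖ ^ 2)))) (-((a / (a + b)) • w))
  rw [htrans, lint_gauss hab, ← ENNReal.ofReal_mul (by positivity)]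

lemma lint_scale {a : ℝ} (ha : 0 < a) (f : ℝ → ℝ≥0∞) (hf : Measurable f) :
    ∫⁻ b in Ioi (0:ℝ), f b = ENNReal.ofReal a * ∫⁻ s in Ioi (0:ℝ), f (a * s) := by
  have hpre : (fun x : ℝ => a * x) ⁻¹' (Ioi 0) = Ioi 0 := by
    ext x; simp [mul_pos_iff_of_pos_left ha]
  have hmap : Measure.map (fun x : ℝ => a * x) (volume.restrict (Ioi 0))
      = ENNReal.ofReal a⁻¹ • (volume.restrict (Ioi (0:ℝ))) := by
    conv_lhs => rw [← hpre]
    rw [← Measure.restrict_map (measurable_const_mul a) measurableSet_Ioi,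
      Real.map_volume_mul_left (ne_of_gt ha), abs_of_pos (inv_pos.mpr ha),
      Measure.restrict_smul]
  have h1 : ∫⁻ s in Ioi (0:ℝ), f (a * s)
      = ENNReal.ofReal a⁻¹ * ∫⁻ b in Ioi (0:ℝ), f b := by
    rw [← lintegral_map hf (measurable_const_mul a), hmap, lintegral_smul_measure, smul_eq_mul]
  rw [h1, ← mul_assoc, ← ENNReal.ofReal_mul ha.le, mul_inv_cancel₀ (ne_of_gt ha)]
  simp

lemma lint_beta : ∫⁻ s in Ioi (0:ℝ), ENNReal.ofReal ((1 + s) ^ (-2:ℝ)) = 1 := by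
  have hmap : Measure.map (fun x : ℝ => 1 + x) (volume.restrict (Ioi 0))
      = volume.restrict (Ioi (1:ℝ)) := by
    have hpre : (fun x : ℝ => 1 + x) ⁻¹' (Ioi 1) = Ioi 0 := by ext x; simp
    conv_lhs => rw [← hpre]
    rw [← Measure.restrict_map (measurable_const_add 1) measurableSet_Ioi,
      map_add_left_eq_self volume 1]
  have h1 : ∫⁻ s in Ioi (0:ℝ), ENNReal.ofReal ((1 + s) ^ (-2:ℝ))
      = ∫⁻ t in Ioi (1:ℝ), ENNReal.ofReal (t ^ (-2:ℝ)) := by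
    rw [← hmap, lintegral_map (by fun_prop) (measurable_const_add 1)]
  rw [h1, ← ofReal_integral_eq_lintegral_ofReal
      (integrableOn_Ioi_rpow_of_lt (by norm_num) one_pos) ?_]
  · rw [integral_Ioi_rpow_of_lt (by norm_num) one_pos]
    norm_num
  · filter_upwards [self_mem_ae_restrict measurableSet_Ioi] with t ht
    have : (0:ℝ) < t := lt_trans one_pos ht
    positivity

lemma subord {n : ℕ} (hp : 0 < (n:ℝ) / 2 - 1) {u : EuclideanSpace ℝ (Fin n)} (hu : u ≠ 0) :
    ∫⁻ t in Ioi (0:ℝ),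
        ENNReal.ofReal (t ^ ((n:ℝ) / 2 - 1 - 1) * rexp (-(t * ‖u‖ ^ 2)))
      = ENNReal.ofReal (Gamma ((n:ℝ) / 2 - 1) * ‖u‖ ^ ((2:ℝ) - n)) := by
  have hu' : 0 < ‖u‖ := norm_pos_iff.mpr hu
  have h := lint_gamma (q := (n:ℝ)/2 - 1) (r := ‖u‖ ^ 2) hp (by positivity)
  have hcomm : ∫⁻ t in Ioi (0:ℝ),
      ENNReal.ofReal (t ^ ((n:ℝ) / 2 - 1 - 1) * rexp (-(t * ‖u‖ ^ 2)))
    = ∫⁻ t in Ioi (0:ℝ),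
      ENNReal.ofReal (t ^ ((n:ℝ) / 2 - 1 - 1) * rexp (-(‖u‖ ^ 2 * t))) :=
    lintegral_congr fun t => by rw [mul_comm t]
  rw [hcomm, h]
  congr 1
  have e1 : (1 / ‖u‖ ^ 2 : ℝ) = ‖u‖ ^ (-2 : ℝ) := by
    rw [one_div, ← Real.rpow_natCast ‖u‖ 2, ← Real.rpow_neg hu'.le]
    norm_num
  rw [e1, ← Real.rpow_mul hu'.le,
    show (-2:ℝ) * ((n:ℝ)/2 - 1) = 2 - (n:ℝ) by ring, mul_comm]

end RieszCompositionAux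

open RieszCompositionAux

lemma riesz_main {n : ℕ} (hn : 5 ≤ n) (w : EuclideanSpace ℝ (Fin n)) (hw : w ≠ 0) :
    ∫⁻ z : EuclideanSpace ℝ (Fin n),
        ENNReal.ofReal (‖w - z‖ ^ ((2:ℝ) - n) * ‖z‖ ^ ((2:ℝ) - n))
      = ENNReal.ofReal ((π ^ ((n:ℝ) / 2) * Gamma ((n:ℝ) / 2 - 2)
          / Gamma ((n:ℝ) / 2 - 1) ^ 2) * ‖w‖ ^ ((4:ℝ) - n)) := by
  have hn5 : (5:ℝ) ≤ (n:ℝ) := by exact_mod_cast hn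
  have hp : 0 < (n:ℝ)/2 - 1 := by linarith
  have hq : 0 < (n:ℝ)/2 - 2 := by linarith
  have hw' : 0 < ‖w‖ := norm_pos_iff.mpr hw
  have hGp : 0 < Gamma ((n:ℝ)/2 - 1) := Gamma_pos_of_pos hp
  have hGq : 0 < Gamma ((n:ℝ)/2 - 2) := Gamma_pos_of_pos hq
  set c : ℝ≥0∞ := ENNReal.ofReal (Gamma ((n:ℝ)/2 - 1)) ^ 2 with hc
  have hc0 : c ≠ 0 := pow_ne_zero 2 (ENNReal.ofReal_pos.mpr hGp).ne'
  have hcT : c ≠ ⊤ := by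
    rw [hc]; exact ENNReal.pow_ne_top ENNReal.ofReal_ne_top
  set μ2 : Measure (ℝ × ℝ) :=
    (volume.restrict (Ioi 0)).prod (volume.restrict (Ioi 0)) with hμ2
  set G : ℝ × ℝ → EuclideanSpace ℝ (Fin n) → ℝ≥0∞ := fun y z =>
    ENNReal.ofReal (y.1 ^ ((n:ℝ)/2 - 1 - 1) * rexp (-(y.1 * ‖w - z‖ ^ 2)))
      * ENNReal.ofReal (y.2 ^ ((n:ℝ)/2 - 1 - 1) * rexp (-(y.2 * ‖z‖ ^ 2))) with hG
  set Hf : ℝ × ℝ → ℝ≥0∞ := fun y =>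
    ENNReal.ofReal (y.1 ^ ((n:ℝ)/2 - 1 - 1) * y.2 ^ ((n:ℝ)/2 - 1 - 1)
      * ((π / (y.1 + y.2)) ^ ((n:ℝ)/2)
          * rexp (-(y.1 * y.2 / (y.1 + y.2) * ‖w‖ ^ 2)))) with hHf
  set Φ : ℝ → ℝ → ℝ≥0∞ := fun a s =>
    ENNReal.ofReal (a ^ ((n:ℝ)/2 - 2 - 1) * rexp (-(s * ‖w‖ ^ 2 / (1 + s) * a)))
      * ENNReal.ofReal (s ^ ((n:ℝ)/2 - 1 - 1) * (π / (1 + s)) ^ ((n:ℝ)/2)) with hΦ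
  -- a.e. facts
  haveI : Nontrivial (EuclideanSpace ℝ (Fin n)) := by
    refine ⟨⟨EuclideanSpace.single (⟨0, by omega⟩ : Fin n) (1:ℝ), 0, fun h => ?_⟩⟩
    have := congrArg (fun v : EuclideanSpace ℝ (Fin n) => v (⟨0, by omega⟩ : Fin n)) h
    simp [EuclideanSpace.single_apply] at this
  have hae : ∀ᵐ z : EuclideanSpace ℝ (Fin n) ∂volume, z ≠ 0 ∧ z ≠ w := by
    filter_upwards [compl_mem_ae_iff.mpr (measure_singleton (0 : EuclideanSpace ℝ (Fin n))),
      compl_mem_ae_iff.mpr (measure_singleton w)] with z h0 hw2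
    exact ⟨h0, hw2⟩
  have haeμ2 : ∀ᵐ y : ℝ × ℝ ∂μ2, 0 < y.1 ∧ 0 < y.2 := by
    have h : μ2 = (volume.prod volume).restrict (Ioi 0 ×ˢ Ioi 0) := by
      rw [hμ2, Measure.prod_restrict]
    rw [h]
    filter_upwards [self_mem_ae_restrict (measurableSet_Ioi.prod measurableSet_Ioi)] with y hy
    exact ⟨hy.1, hy.2⟩
  -- Step 1
  have step1 : ∀ z : EuclideanSpace ℝ (Fin n), z ≠ 0 → z ≠ w →
      ∫⁻ y, G y z ∂μ2
        = c * ENNReal.ofReal (‖w - z‖ ^ ((2:ℝ) - n) * ‖z‖ ^ ((2:ℝ) - n)) := by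
    intro z h0 hw2
    have hwz : w - z ≠ 0 := sub_ne_zero.mpr (fun h => hw2 h.symm)
    have hB := RieszCompositionAux.subord hp h0
    have hA := RieszCompositionAux.subord hp hwz
    rw [hμ2, lintegral_prod _ (by simp only [hG]; fun_prop)]
    simp only [hG]
    calc ∫⁻ a in Ioi (0:ℝ), ∫⁻ b in Ioi (0:ℝ),
          ENNReal.ofReal (a ^ ((n:ℝ)/2 - 1 - 1) * rexp (-(a * ‖w - z‖ ^ 2)))
            * ENNReal.ofReal (b ^ ((n:ℝ)/2 - 1 - 1) * rexp (-(b * ‖z‖ ^ 2)))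
        = ∫⁻ a in Ioi (0:ℝ),
            ENNReal.ofReal (a ^ ((n:ℝ)/2 - 1 - 1) * rexp (-(a * ‖w - z‖ ^ 2)))
              * ENNReal.ofReal (Gamma ((n:ℝ)/2 - 1) * ‖z‖ ^ ((2:ℝ) - n)) := by
          refine lintegral_congr fun a => ?_
          rw [lintegral_const_mul' _ _ ENNReal.ofReal_ne_top, hB]
      _ = (∫⁻ a in Ioi (0:ℝ),
            ENNReal.ofReal (a ^ ((n:ℝ)/2 - 1 - 1) * rexp (-(a * ‖w - z‖ ^ 2))))
              * ENNReal.ofReal (Gamma ((n:ℝ)/2 - 1) * ‖z‖ ^ ((2:ℝ) - n)) :=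
          lintegral_mul_const' _ _ ENNReal.ofReal_ne_top
      _ = ENNReal.ofReal (Gamma ((n:ℝ)/2 - 1) * ‖w - z‖ ^ ((2:ℝ) - n))
            * ENNReal.ofReal (Gamma ((n:ℝ)/2 - 1) * ‖z‖ ^ ((2:ℝ) - n)) := by
          rw [hA]
      _ = c * ENNReal.ofReal (‖w - z‖ ^ ((2:ℝ) - n) * ‖z‖ ^ ((2:ℝ) - n)) := by
          rw [ENNReal.ofReal_mul hGp.le, ENNReal.ofReal_mul hGp.le,
            ENNReal.ofReal_mul (Real.rpow_nonneg (norm_nonneg _) _), hc, sq]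
          ring
  -- Step 4
  have step4 : ∀ a b : ℝ, 0 < a → 0 < b →
      ∫⁻ z : EuclideanSpace ℝ (Fin n), G (a, b) z = Hf (a, b) := by
    intro a b ha hb
    have e : ∀ z : EuclideanSpace ℝ (Fin n), G (a, b) z
        = ENNReal.ofReal (a ^ ((n:ℝ)/2 - 1 - 1) * b ^ ((n:ℝ)/2 - 1 - 1))
          * ENNReal.ofReal (rexp (-(a * ‖w - z‖ ^ 2 + b * ‖z‖ ^ 2))) := by
      intro z
      simp only [hG]
      rw [show -(a * ‖w - z‖ ^ 2 + b * ‖z‖ ^ 2)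
          = -(a * ‖w - z‖ ^ 2) + -(b * ‖z‖ ^ 2) by ring, Real.exp_add,
        ← ENNReal.ofReal_mul (by positivity), ← ENNReal.ofReal_mul (by positivity)]
      congr 1
      ring
    simp_rw [e]
    rw [lintegral_const_mul' _ _ ENNReal.ofReal_ne_top,
      RieszCompositionAux.lint_gauss_two w ha hb,
      ← ENNReal.ofReal_mul (by positivity), hHf]
  -- Step 6
  have step6 : ∀ a : ℝ, 0 < a →
      ∫⁻ b in Ioi (0:ℝ), Hf (a, b) = ∫⁻ s in Ioi (0:ℝ), Φ a s := by
    intro a ha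
    rw [RieszCompositionAux.lint_scale ha (fun b => Hf (a, b)) (by simp only [hHf]; fun_prop),
      ← lintegral_const_mul' _ _ ENNReal.ofReal_ne_top]
    refine setLIntegral_congr_fun measurableSet_Ioi (fun s hs => ?_)
    have hs : (0:ℝ) < s := hs
    have h1s : (0:ℝ) < 1 + s := by linarith
    simp only [hHf, hΦ]
    have e3 : a * (a * s) / (a + a * s) * ‖w‖ ^ 2 = s * ‖w‖ ^ 2 / (1 + s) * a := by
      rw [show a + a * s = a * (1 + s) by ring]
      field_simp
    have e2 : π / (a + a * s) = a⁻¹ * (π / (1 + s)) := by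
      rw [show a + a * s = a * (1 + s) by ring]
      field_simp
    rw [← ENNReal.ofReal_mul ha.le, ← ENNReal.ofReal_mul (by positivity)]
    congr 1
    rw [e3, e2, Real.mul_rpow ha.le hs.le,
      Real.mul_rpow (inv_nonneg.mpr ha.le) (by positivity),
      Real.inv_rpow ha.le, ← Real.rpow_neg ha.le]
    have ea : a ^ ((n:ℝ)/2 - 2 - 1)
        = a ^ (1 + (((n:ℝ)/2 - 1 - 1) + (((n:ℝ)/2 - 1 - 1) + -((n:ℝ)/2)))) := by
      congr 1; ring
    rw [ea, Real.rpow_add ha, Real.rpow_one, Real.rpow_add ha, Real.rpow_add ha]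
    ring
  -- Step 8
  have step8 : ∀ s : ℝ, 0 < s →
      ∫⁻ a in Ioi (0:ℝ), Φ a s
        = ENNReal.ofReal (π ^ ((n:ℝ)/2) * Gamma ((n:ℝ)/2 - 2) * ‖w‖ ^ ((4:ℝ) - n))
          * ENNReal.ofReal ((1 + s) ^ (-2:ℝ)) := by
    intro s hs
    have h1s : (0:ℝ) < 1 + s := by linarith
    have hC : 0 < s * ‖w‖ ^ 2 / (1 + s) := by positivity
    simp only [hΦ]
    rw [lintegral_mul_const' _ _ ENNReal.ofReal_ne_top,
      RieszCompositionAux.lint_gamma hq hC,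
      ← ENNReal.ofReal_mul (by positivity), ← ENNReal.ofReal_mul (by positivity)]
    congr 1
    have e1 : 1 / (s * ‖w‖ ^ 2 / (1 + s)) = (1 + s) * (s⁻¹ * (‖w‖ ^ 2)⁻¹) := by
      field_simp
    rw [e1, Real.mul_rpow h1s.le (by positivity),
      Real.mul_rpow (inv_nonneg.mpr hs.le) (by positivity),
      Real.inv_rpow hs.le, ← Real.rpow_neg hs.le,
      Real.inv_rpow (by positivity), ← Real.rpow_neg (by positivity)]
    have ew : ((‖w‖ ^ 2 : ℝ)) ^ (-((n:ℝ)/2 - 2)) = ‖w‖ ^ ((4:ℝ) - n) := by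
      rw [← Real.rpow_natCast ‖w‖ 2, ← Real.rpow_mul hw'.le]
      congr 1; push_cast; ring
    have ediv : (π / (1 + s)) ^ ((n:ℝ)/2)
        = π ^ ((n:ℝ)/2) * (1 + s) ^ (-((n:ℝ)/2)) := by
      rw [div_eq_mul_inv, Real.mul_rpow pi_pos.le (by positivity),
        Real.inv_rpow h1s.le, ← Real.rpow_neg h1s.le]
    rw [ew, ediv]
    have es : s ^ (-((n:ℝ)/2 - 2)) * s ^ ((n:ℝ)/2 - 1 - 1) = 1 := by
      rw [← Real.rpow_add hs, show -((n:ℝ)/2 - 2) + ((n:ℝ)/2 - 1 - 1) = 0 by ring,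
        Real.rpow_zero]
    have e1s : (1 + s) ^ ((n:ℝ)/2 - 2) * (1 + s) ^ (-((n:ℝ)/2)) = (1 + s) ^ (-2:ℝ) := by
      rw [← Real.rpow_add h1s]
      congr 1; ring
    calc (1 + s) ^ ((n:ℝ)/2 - 2) * (s ^ (-((n:ℝ)/2 - 2)) * ‖w‖ ^ ((4:ℝ) - n))
          * Gamma ((n:ℝ)/2 - 2)
          * (s ^ ((n:ℝ)/2 - 1 - 1) * (π ^ ((n:ℝ)/2) * (1 + s) ^ (-((n:ℝ)/2))))
        = ((1 + s) ^ ((n:ℝ)/2 - 2) * (1 + s) ^ (-((n:ℝ)/2)))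
            * ((s ^ (-((n:ℝ)/2 - 2)) * s ^ ((n:ℝ)/2 - 1 - 1))
              * (π ^ ((n:ℝ)/2) * Gamma ((n:ℝ)/2 - 2) * ‖w‖ ^ ((4:ℝ) - n))) := by ring
      _ = (1 + s) ^ (-2:ℝ)
            * (1 * (π ^ ((n:ℝ)/2) * Gamma ((n:ℝ)/2 - 2) * ‖w‖ ^ ((4:ℝ) - n))) := by
          rw [es, e1s]
      _ = π ^ ((n:ℝ)/2) * Gamma ((n:ℝ)/2 - 2) * ‖w‖ ^ ((4:ℝ) - n) * (1 + s) ^ (-2:ℝ) := by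
          ring
  -- main chain
  have key : c * ∫⁻ z : EuclideanSpace ℝ (Fin n),
      ENNReal.ofReal (‖w - z‖ ^ ((2:ℝ) - n) * ‖z‖ ^ ((2:ℝ) - n))
        = ENNReal.ofReal (π ^ ((n:ℝ)/2) * Gamma ((n:ℝ)/2 - 2) * ‖w‖ ^ ((4:ℝ) - n)) := by
    calc c * ∫⁻ z : EuclideanSpace ℝ (Fin n),
        ENNReal.ofReal (‖w - z‖ ^ ((2:ℝ) - n) * ‖z‖ ^ ((2:ℝ) - n))
        = ∫⁻ z : EuclideanSpace ℝ (Fin n),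
            c * ENNReal.ofReal (‖w - z‖ ^ ((2:ℝ) - n) * ‖z‖ ^ ((2:ℝ) - n)) :=
          (lintegral_const_mul' c _ hcT).symm
      _ = ∫⁻ z : EuclideanSpace ℝ (Fin n), ∫⁻ y, G y z ∂μ2 := by
          refine lintegral_congr_ae ?_
          filter_upwards [hae] with z hz
          exact (step1 z hz.1 hz.2).symm
      _ = ∫⁻ y, ∫⁻ z : EuclideanSpace ℝ (Fin n), G y z ∂volume ∂μ2 :=
          lintegral_lintegral_swap (by
            simp only [hG]
            fun_prop)
      _ = ∫⁻ y, Hf y ∂μ2 := by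
          refine lintegral_congr_ae ?_
          filter_upwards [haeμ2] with y hy
          have := step4 y.1 y.2 hy.1 hy.2
          simpa using this
      _ = ∫⁻ a in Ioi (0:ℝ), ∫⁻ b in Ioi (0:ℝ), Hf (a, b) := by
          rw [hμ2]
          exact lintegral_prod _ (by simp only [hHf]; fun_prop)
      _ = ∫⁻ a in Ioi (0:ℝ), ∫⁻ s in Ioi (0:ℝ), Φ a s := by
          refine lintegral_congr_ae ?_
          filter_upwards [self_mem_ae_restrict measurableSet_Ioi] with a ha
          exact step6 a ha
      _ = ∫⁻ s in Ioi (0:ℝ), ∫⁻ a in Ioi (0:ℝ), Φ a s :=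
          lintegral_lintegral_swap (by
            simp only [hΦ]
            fun_prop)
      _ = ∫⁻ s in Ioi (0:ℝ),
            ENNReal.ofReal (π ^ ((n:ℝ)/2) * Gamma ((n:ℝ)/2 - 2) * ‖w‖ ^ ((4:ℝ) - n))
              * ENNReal.ofReal ((1 + s) ^ (-2:ℝ)) := by
          refine lintegral_congr_ae ?_
          filter_upwards [self_mem_ae_restrict measurableSet_Ioi] with s hs
          exact step8 s hs
      _ = ENNReal.ofReal (π ^ ((n:ℝ)/2) * Gamma ((n:ℝ)/2 - 2) * ‖w‖ ^ ((4:ℝ) - n))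
            * ∫⁻ s in Ioi (0:ℝ), ENNReal.ofReal ((1 + s) ^ (-2:ℝ)) :=
          lintegral_const_mul' _ _ ENNReal.ofReal_ne_top
      _ = ENNReal.ofReal (π ^ ((n:ℝ)/2) * Gamma ((n:ℝ)/2 - 2) * ‖w‖ ^ ((4:ℝ) - n)) := by
          rw [RieszCompositionAux.lint_beta, mul_one]
  -- cancellation
  have hrhs : c * ENNReal.ofReal ((π ^ ((n:ℝ)/2) * Gamma ((n:ℝ)/2 - 2)
      / Gamma ((n:ℝ)/2 - 1) ^ 2) * ‖w‖ ^ ((4:ℝ) - n))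
        = ENNReal.ofReal (π ^ ((n:ℝ)/2) * Gamma ((n:ℝ)/2 - 2) * ‖w‖ ^ ((4:ℝ) - n)) := by
    rw [hc, ← ENNReal.ofReal_pow hGp.le, ← ENNReal.ofReal_mul (by positivity)]
    congr 1
    have hne2 : (Gamma ((n:ℝ)/2 - 1)) ^ 2 ≠ 0 := pow_ne_zero _ hGp.ne'
    calc Gamma ((n:ℝ)/2 - 1) ^ 2 * ((π ^ ((n:ℝ)/2) * Gamma ((n:ℝ)/2 - 2)
          / Gamma ((n:ℝ)/2 - 1) ^ 2) * ‖w‖ ^ ((4:ℝ) - n))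
        = (Gamma ((n:ℝ)/2 - 1) ^ 2 / Gamma ((n:ℝ)/2 - 1) ^ 2)
            * (π ^ ((n:ℝ)/2) * Gamma ((n:ℝ)/2 - 2) * ‖w‖ ^ ((4:ℝ) - n)) := by ring
      _ = π ^ ((n:ℝ)/2) * Gamma ((n:ℝ)/2 - 2) * ‖w‖ ^ ((4:ℝ) - n) := by
          rw [div_self hne2, one_mul]
  have hfin := key.trans hrhs.symm
  have h2 : c⁻¹ * (c * ∫⁻ z : EuclideanSpace ℝ (Fin n),
      ENNReal.ofReal (‖w - z‖ ^ ((2:ℝ) - n) * ‖z‖ ^ ((2:ℝ) - n)))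
        = c⁻¹ * (c * ENNReal.ofReal ((π ^ ((n:ℝ)/2) * Gamma ((n:ℝ)/2 - 2)
          / Gamma ((n:ℝ)/2 - 1) ^ 2) * ‖w‖ ^ ((4:ℝ) - n))) := by rw [hfin]
  rwa [← mul_assoc, ← mul_assoc, ENNReal.inv_mul_cancel hc0 hcT, one_mul, one_mul] at h2

/-- the Riesz composition (semigroup) identity for the Riesz kernels on `ℝⁿ`,
`n ≥ 5`: `∫ |x−z|^{2−n}|z−y|^{2−n} dz = π^{n/2} Γ(n/2−2)/Γ(n/2−1)² · |x−y|^{4−n}`. -/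
theorem riesz_composition {n : ℕ} (hn : 5 ≤ n)
    (x y : EuclideanSpace ℝ (Fin n)) (hxy : x ≠ y) :
    ∫ z, ‖x - z‖ ^ ((2 : ℝ) - n) * ‖z - y‖ ^ ((2 : ℝ) - n) ∂volume
      = (π ^ ((n : ℝ) / 2) * Gamma ((n : ℝ) / 2 - 2) / (Gamma ((n : ℝ) / 2 - 1)) ^ 2)
        * ‖x - y‖ ^ ((4 : ℝ) - n) := by
  have hn5 : (5:ℝ) ≤ (n:ℝ) := by exact_mod_cast hn
  have hw : x - y ≠ 0 := sub_ne_zero.mpr hxy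
  have hmain := riesz_main hn (x - y) hw
  have hnn : ∀ z : EuclideanSpace ℝ (Fin n),
      0 ≤ ‖x - z‖ ^ ((2:ℝ) - n) * ‖z - y‖ ^ ((2:ℝ) - n) := fun z => by positivity
  rw [integral_eq_lintegral_of_nonneg_ae (Filter.Eventually.of_forall hnn)
    (Measurable.aestronglyMeasurable (by fun_prop))]
  have htrans : ∫⁻ z : EuclideanSpace ℝ (Fin n),
      ENNReal.ofReal (‖x - z‖ ^ ((2:ℝ) - n) * ‖z - y‖ ^ ((2:ℝ) - n))
        = ∫⁻ z : EuclideanSpace ℝ (Fin n),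
          ENNReal.ofReal (‖(x - y) - z‖ ^ ((2:ℝ) - n) * ‖z‖ ^ ((2:ℝ) - n)) := by
    rw [← lintegral_add_right_eq_self (fun z : EuclideanSpace ℝ (Fin n) =>
      ENNReal.ofReal (‖x - z‖ ^ ((2:ℝ) - n) * ‖z - y‖ ^ ((2:ℝ) - n))) y]
    refine lintegral_congr fun z => ?_
    have e1 : x - (z + y) = (x - y) - z := by abel
    have e2 : z + y - y = z := by abel
    rw [e1, e2]
  rw [htrans, hmain, ENNReal.toReal_ofReal]
  have h1 : 0 < Gamma ((n:ℝ)/2 - 1) := Gamma_pos_of_pos (by linarith)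
  have h2 : 0 < Gamma ((n:ℝ)/2 - 2) := Gamma_pos_of_pos (by linarith)
  positivity
end

section
/- Let n > 2m ≥ 2 and fix λ₀ ∈ ℝ with λ₀ < 0. Suppose u : ℝⁿ → ℝ is continuous, nonnegative and satisfies the integral equation u(x) = ∫_{ℝⁿ} u^p(y) |x−y|^{2m−n} (1+|y|²)^{−α} dy on ℝⁿ with p ≥ 1, α > 0, all integrals finite, and u not identically zero. If u(x) = u(x^{λ₀}) for all x in the half-space Σ_{λ₀} = {x₁ < λ₀} (where x^{λ₀} is the reflection about {x₁ = λ₀}), then a contradiction follows; i.e., u cannot be exactly symmetric about any plane {x₁ = λ₀} with λ₀ ≠ 0. -/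
open MeasureTheory

/-- Reflection of `x` about the hyperplane `{x_i = l}`. -/
noncomputable def reflectPlane {n : ℕ} (i : Fin n) (l : ℝ)
    (x : EuclideanSpace ℝ (Fin n)) : EuclideanSpace ℝ (Fin n) :=
  x + (2 * (l - x i)) • EuclideanSpace.single i (1 : ℝ)

namespace NoSymAux

variable {n : ℕ} (i : Fin n) (l : ℝ)

lemma reflect_apply (x : EuclideanSpace ℝ (Fin n)) (j : Fin n) :
    reflectPlane i l x j = if j = i then 2 * l - x i else x j := by
  simp only [reflectPlane, PiLp.add_apply, PiLp.smul_apply, EuclideanSpace.single_apply,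
    smul_eq_mul]
  split
  · next h => subst h; ring
  · ring

lemma reflect_involutive (x : EuclideanSpace ℝ (Fin n)) :
    reflectPlane i l (reflectPlane i l x) = x := by
  ext j
  by_cases h : j = i
  · subst h; simp [reflect_apply]
  · simp [reflect_apply, h]

lemma norm_sq_eq (x : EuclideanSpace ℝ (Fin n)) : ‖x‖ ^ 2 = ∑ j, x j ^ 2 := by
  rw [EuclideanSpace.norm_eq, Real.sq_sqrt (by positivity)]
  simp [Real.norm_eq_abs, sq_abs]



lemma sum_erase_eq (x y : EuclideanSpace ℝ (Fin n)) (f : EuclideanSpace ℝ (Fin n) → Fin n → ℝ)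
    (h : ∀ j ≠ i, f x j = f y j) :
    ∑ j ∈ Finset.univ.erase i, f x j ^ 2 = ∑ j ∈ Finset.univ.erase i, f y j ^ 2 :=
  Finset.sum_congr rfl fun j hj => by rw [h j (Finset.ne_of_mem_erase hj)]

lemma reflect_norm_sq (x : EuclideanSpace ℝ (Fin n)) :
    ‖reflectPlane i l x‖ ^ 2 = ‖x‖ ^ 2 + ((2 * l - x i) ^ 2 - x i ^ 2) := by
  rw [norm_sq_eq, norm_sq_eq, ← Finset.add_sum_erase _ _ (Finset.mem_univ i),
    ← Finset.add_sum_erase _ (fun j => x j ^ 2) (Finset.mem_univ i)]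
  have h := sum_erase_eq i (reflectPlane i l x) x (fun z j => z j)
  simp only at h
  rw [h (fun j hj => by rw [reflect_apply, if_neg hj]), reflect_apply, if_pos rfl]
  ring

lemma dist_reflect_sq (x y : EuclideanSpace ℝ (Fin n)) :
    ‖x - reflectPlane i l y‖ ^ 2 = ‖x - y‖ ^ 2 + 4 * (l - x i) * (l - y i) := by
  rw [norm_sq_eq, norm_sq_eq, ← Finset.add_sum_erase _ _ (Finset.mem_univ i),
    ← Finset.add_sum_erase _ (fun j => (x - y) j ^ 2) (Finset.mem_univ i)]
  have h : ∑ j ∈ Finset.univ.erase i, (x - reflectPlane i l y) j ^ 2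
      = ∑ j ∈ Finset.univ.erase i, (x - y) j ^ 2 := by
    refine Finset.sum_congr rfl fun j hj => ?_
    have hji := Finset.ne_of_mem_erase hj
    simp only [PiLp.sub_apply, reflect_apply, if_neg hji]
  rw [h]
  simp only [PiLp.sub_apply, reflect_apply, eq_self_iff_true, if_true]
  ring

lemma reflect_dist (x y : EuclideanSpace ℝ (Fin n)) :
    ‖reflectPlane i l x - reflectPlane i l y‖ = ‖x - y‖ := by
  have h2 : ‖reflectPlane i l x - reflectPlane i l y‖ ^ 2 = ‖x - y‖ ^ 2 := by
    rw [norm_sq_eq, norm_sq_eq]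
    refine Finset.sum_congr rfl fun j _ => ?_
    by_cases h : j = i
    · subst h
      simp only [PiLp.sub_apply, reflect_apply, eq_self_iff_true, if_true]
      ring
    · simp only [PiLp.sub_apply, reflect_apply, if_neg h]
  have := congrArg Real.sqrt h2
  simpa [Real.sqrt_sq, norm_nonneg] using this


noncomputable def reflLinearMap (i : Fin n) :
    EuclideanSpace ℝ (Fin n) →ₗ[ℝ] EuclideanSpace ℝ (Fin n) where
  toFun := reflectPlane i 0
  map_add' x y := by
    ext j
    by_cases h : j = i
    · subst h
      simp only [reflect_apply, eq_self_iff_true, if_true, PiLp.add_apply]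
      ring
    · simp only [reflect_apply, if_neg h, PiLp.add_apply]
  map_smul' c x := by
    ext j
    by_cases h : j = i
    · subst h
      simp only [reflect_apply, eq_self_iff_true, if_true, PiLp.smul_apply, smul_eq_mul,
        RingHom.id_apply]
      ring
    · simp only [reflect_apply, if_neg h, PiLp.smul_apply, RingHom.id_apply]

noncomputable def reflLinear (i : Fin n) :
    EuclideanSpace ℝ (Fin n) ≃ₗᵢ[ℝ] EuclideanSpace ℝ (Fin n) where
  toLinearEquiv := LinearEquiv.ofInvolutive (reflLinearMap i) (fun x => reflect_involutive i 0 x)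
  norm_map' x := by
    have h2 : ‖reflectPlane i 0 x‖ ^ 2 = ‖x‖ ^ 2 := by
      rw [reflect_norm_sq]; ring
    have := congrArg Real.sqrt h2
    exact (by simpa [Real.sqrt_sq, norm_nonneg] using this : ‖reflectPlane i 0 x‖ = ‖x‖)

lemma reflect_eq_linear_add (x : EuclideanSpace ℝ (Fin n)) :
    reflectPlane i l x = reflLinear i x + (2 * l) • EuclideanSpace.single i (1 : ℝ) := by
  ext j
  have : reflLinear i x = reflectPlane i 0 x := rfl
  by_cases h : j = i
  · subst h
    simp only [this, PiLp.add_apply, PiLp.smul_apply, EuclideanSpace.single_apply,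
      eq_self_iff_true, if_true, reflect_apply, smul_eq_mul]
    ring
  · simp only [this, PiLp.add_apply, PiLp.smul_apply, EuclideanSpace.single_apply,
      if_neg h, reflect_apply, smul_eq_mul]
    ring

lemma continuous_reflect : Continuous (reflectPlane i l) := by
  have : reflectPlane i l
      = fun x => reflLinear i x + (2 * l) • EuclideanSpace.single i (1 : ℝ) :=
    funext (reflect_eq_linear_add i l)
  rw [this]
  exact ((reflLinear i).continuous).add continuous_const

lemma measurePreserving_reflect :
    MeasurePreserving (reflectPlane i l) (volume : Measure (EuclideanSpace ℝ (Fin n))) volume := by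
  have : reflectPlane i l
      = (fun z => z + (2 * l) • EuclideanSpace.single i (1 : ℝ)) ∘ (reflLinear i) :=
    funext (reflect_eq_linear_add i l)
  rw [this]
  exact (measurePreserving_add_right volume _).comp (reflLinear i).measurePreserving

noncomputable def reflectMEquiv :
    EuclideanSpace ℝ (Fin n) ≃ᵐ EuclideanSpace ℝ (Fin n) where
  toEquiv := Function.Involutive.toPerm _ (reflect_involutive i l)
  measurable_toFun := (continuous_reflect i l).measurable
  measurable_invFun := (continuous_reflect i l).measurable

lemma measurableEmbedding_reflect :
    MeasurableEmbedding (reflectPlane i l) (α := EuclideanSpace ℝ (Fin n)) :=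
  (reflectMEquiv i l).measurableEmbedding

end NoSymAux


set_option maxHeartbeats 1600000 in
/-- a nontrivial nonnegative continuous solution of the integral equation
`u(x) = ∫ u^p(y)|x−y|^{2m−n}(1+|y|²)^{−α} dy` cannot be exactly symmetric about a plane
`{x₁ = λ₀}` with `λ₀ < 0`: assuming `u(x) = u(x^{λ₀})` for all `x` in `Σ_{λ₀} = {x₁ < λ₀}`
leads to a contradiction. -/
theorem no_symmetry_about_negative_plane {n m : ℕ} (hm : 1 ≤ m) (hnm : 2 * m < n)
    (l₀ : ℝ) (hl₀ : l₀ < 0)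
    (p α : ℝ) (hp : 1 ≤ p) (hα : 0 < α)
    (u : EuclideanSpace ℝ (Fin n) → ℝ) (hcont : Continuous u) (hpos : ∀ x, 0 ≤ u x)
    (hInt : ∀ x, Integrable
      (fun y => u y ^ p * ‖x - y‖ ^ (2 * (m : ℝ) - n) * (1 + ‖y‖ ^ 2) ^ (-α)) volume)
    (heq : ∀ x, u x =
      ∫ y, u y ^ p * ‖x - y‖ ^ (2 * (m : ℝ) - n) * (1 + ‖y‖ ^ 2) ^ (-α) ∂volume)
    (hne : ∃ x, u x ≠ 0)
    (hsym : ∀ x : EuclideanSpace ℝ (Fin n), x ⟨0, by omega⟩ < l₀ →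
      u x = u (reflectPlane ⟨0, by omega⟩ l₀ x)) :
    False := by
  classical
  have hn0 : 0 < n := by omega
  set i : Fin n := ⟨0, by omega⟩ with hidef
  haveI : Nontrivial (EuclideanSpace ℝ (Fin n)) := by
    refine ⟨EuclideanSpace.single i 1, 0, fun h => ?_⟩
    have h1 : (EuclideanSpace.single i (1:ℝ)) i = (0 : EuclideanSpace ℝ (Fin n)) i := by rw [h]
    simp [EuclideanSpace.single_apply] at h1
  have hcast : (2 * m : ℝ) < n := by exact_mod_cast hnm
  set e : ℝ := 2 * (m : ℝ) - n with hedef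
  have hneg : e < 0 := by rw [hedef]; linarith
  -- nonnegativity of the integrand
  have hnonneg : ∀ x y : EuclideanSpace ℝ (Fin n),
      0 ≤ u y ^ p * ‖x - y‖ ^ e * (1 + ‖y‖ ^ 2) ^ (-α) := fun x y =>
    mul_nonneg (mul_nonneg (Real.rpow_nonneg (hpos y) p)
      (Real.rpow_nonneg (norm_nonneg _) e)) (Real.rpow_nonneg (by positivity) _)
  -- u is positive everywhere
  obtain ⟨x₀, hx₀ne⟩ := hne
  have hx₀ : 0 < u x₀ := (hpos x₀).lt_of_ne (Ne.symm hx₀ne)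
  have hVopen : IsOpen {y : EuclideanSpace ℝ (Fin n) | 0 < u y} :=
    isOpen_lt continuous_const hcont
  have upos : ∀ x, 0 < u x := by
    intro x
    rw [heq x]
    rw [integral_pos_iff_support_of_nonneg_ae
      (Filter.Eventually.of_forall (hnonneg x)) (hInt x)]
    have hsub : {y : EuclideanSpace ℝ (Fin n) | 0 < u y} \ {x}
        ⊆ Function.support fun y => u y ^ p * ‖x - y‖ ^ e * (1 + ‖y‖ ^ 2) ^ (-α) := by
      rintro y ⟨hy1, hy2⟩
      have h1 : 0 < u y ^ p := Real.rpow_pos_of_pos hy1 p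
      have hxy : x - y ≠ 0 := sub_ne_zero.mpr (Ne.symm hy2)
      have h2 : 0 < ‖x - y‖ ^ e := Real.rpow_pos_of_pos (norm_pos_iff.mpr hxy) e
      have h3 : 0 < (1 + ‖y‖ ^ 2) ^ (-α) := Real.rpow_pos_of_pos (by positivity) _
      exact ne_of_gt (mul_pos (mul_pos h1 h2) h3)
    refine lt_of_lt_of_le ?_ (measure_mono hsub)
    rw [measure_diff_null (measure_singleton x)]
    exact hVopen.measure_pos volume ⟨x₀, hx₀⟩
  -- notation
  set R : EuclideanSpace ℝ (Fin n) → EuclideanSpace ℝ (Fin n) := reflectPlane i l₀ with hRdef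
  have hRmp : MeasurePreserving R volume volume := NoSymAux.measurePreserving_reflect i l₀
  have hRemb : MeasurableEmbedding R := NoSymAux.measurableEmbedding_reflect i l₀
  have hRi : ∀ y : EuclideanSpace ℝ (Fin n), R y i = 2 * l₀ - y i := fun y => by
    rw [hRdef, NoSymAux.reflect_apply, if_pos rfl]
  have hRR : ∀ y, R (R y) = y := fun y => NoSymAux.reflect_involutive i l₀ y
  -- the base point
  set z : EuclideanSpace ℝ (Fin n) := (l₀ - 1) • EuclideanSpace.single i (1:ℝ) with hzdef
  have hzi : z i = l₀ - 1 := by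
    rw [hzdef]
    simp [EuclideanSpace.single_apply]
  have hzA : z i < l₀ := by rw [hzi]; linarith
  have hz_symm : u z = u (R z) := hsym z hzA
  -- transformed integrand
  set T : EuclideanSpace ℝ (Fin n) → ℝ :=
    fun y => u (R y) ^ p * ‖z - y‖ ^ e * (1 + ‖R y‖ ^ 2) ^ (-α) with hTdef
  have hTcomp : (fun y => u y ^ p * ‖R z - y‖ ^ e * (1 + ‖y‖ ^ 2) ^ (-α)) ∘ R = T := by
    funext y
    simp only [Function.comp_apply, hTdef]
    rw [hRdef, NoSymAux.reflect_dist i l₀ z y]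
  have hTint : Integrable T volume := by
    rw [← hTcomp]
    exact (hRmp.integrable_comp_emb hRemb).mpr (hInt (R z))
  have hTeq : (∫ y, T y ∂volume) = u (R z) := by
    rw [heq (R z),
      ← hRmp.integral_comp hRemb (fun y => u y ^ p * ‖R z - y‖ ^ e * (1 + ‖y‖ ^ 2) ^ (-α))]
    refine integral_congr_ae (Filter.Eventually.of_forall fun y => ?_)
    show T y = u (R y) ^ p * ‖R z - R y‖ ^ e * (1 + ‖R y‖ ^ 2) ^ (-α)
    rw [hTdef]
    simp only
    rw [hRdef, NoSymAux.reflect_dist i l₀ z y]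
  set F : EuclideanSpace ℝ (Fin n) → ℝ :=
    fun y => u y ^ p * ‖z - y‖ ^ e * (1 + ‖y‖ ^ 2) ^ (-α) - T y with hFdef
  have hFint : Integrable F volume := (hInt z).sub hTint
  have hFzero : (∫ y, F y ∂volume) = 0 := by
    rw [hFdef]
    rw [integral_sub (hInt z) hTint, hTeq, ← heq z, hz_symm, sub_self]
  -- the half space
  set A : Set (EuclideanSpace ℝ (Fin n)) := {y | y i < l₀} with hAdef
  have hAopen : IsOpen A := by
    have : A = (EuclideanSpace.proj (𝕜 := ℝ) i) ⁻¹' (Set.Iio l₀) := rfl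
    rw [this]
    exact (EuclideanSpace.proj (𝕜 := ℝ) i).continuous.isOpen_preimage _ isOpen_Iio
  have hAmeas : MeasurableSet A := hAopen.measurableSet
  have hsplit : (∫ y in A, F y ∂volume) + (∫ y in Aᶜ, F y ∂volume) = ∫ y, F y ∂volume :=
    integral_add_compl hAmeas hFint
  have hpre : R ⁻¹' Aᶜ = {y | y i ≤ l₀} := by
    ext y
    simp only [Set.mem_preimage, Set.mem_compl_iff, hAdef, Set.mem_setOf_eq, not_lt, hRi y]
    constructor <;> intro h <;> linarith
  have hcompl : (∫ y in Aᶜ, F y ∂volume) = ∫ y in {y | y i ≤ l₀}, F (R y) ∂volume := by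
    rw [← hRmp.setIntegral_preimage_emb hRemb F Aᶜ, hpre]
  -- the hyperplane is null
  have hplane : volume {y : EuclideanSpace ℝ (Fin n) | y i = l₀} = 0 := by
    have hψ := EuclideanSpace.volume_preserving_symm_measurableEquiv_toLp (Fin n)
    have hset : MeasurableSet {g : Fin n → ℝ | g i = l₀} :=
      show MeasurableSet ((fun g : Fin n → ℝ => g i) ⁻¹' {l₀}) from
        (measurable_pi_apply i) (measurableSet_singleton l₀)
    have h1 : volume {y : EuclideanSpace ℝ (Fin n) | y i = l₀}
        = volume {g : Fin n → ℝ | g i = l₀} := by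
      have := hψ.measure_preimage hset.nullMeasurableSet
      simpa using this
    rw [h1, volume_pi]
    exact MeasureTheory.Measure.pi_hyperplane (fun _ => (volume : Measure ℝ)) i l₀
  have hAe : ({y : EuclideanSpace ℝ (Fin n) | y i ≤ l₀} : Set _) =ᵐ[volume] A := by
    rw [Filter.eventuallyEq_set, MeasureTheory.ae_iff]
    refine measure_mono_null ?_ hplane
    intro y hy
    simp only [Set.mem_setOf_eq, hAdef] at hy ⊢
    by_contra hne
    rcases lt_trichotomy (y i) l₀ with h | h | h
    · exact hy ⟨fun _ => h, fun _ => le_of_lt h⟩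
    · exact hne h
    · exact hy ⟨fun h2 => absurd h2 (not_le.mpr h), fun h2 => absurd h2 (asymm h)⟩
  have hcompl2 : (∫ y in Aᶜ, F y ∂volume) = ∫ y in A, F (R y) ∂volume :=
    hcompl.trans (setIntegral_congr_set hAe)
  have hFRint : Integrable (fun y => F (R y)) volume :=
    (hRmp.integrable_comp_emb hRemb).mpr hFint
  have hsum0 : (∫ y in A, (F y + F (R y)) ∂volume) = 0 := by
    rw [integral_add hFint.integrableOn hFRint.integrableOn, ← hcompl2, hsplit, hFzero]
  -- strict negativity on A \ {z}
  have hkey : ∀ y, y i < l₀ → y ≠ z → F y + F (R y) < 0 := by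
    intro y hyA hyz
    have hsymy : u y = u (R y) := hsym y hyA
    have hdist : ‖z - y‖ < ‖z - R y‖ := by
      have hsq : ‖z - R y‖ ^ 2 = ‖z - y‖ ^ 2 + 4 * (l₀ - z i) * (l₀ - y i) := by
        rw [hRdef]
        exact NoSymAux.dist_reflect_sq i l₀ z y
      have h4 : 0 < 4 * (l₀ - z i) * (l₀ - y i) := by
        rw [hzi]
        have he1 : 4 * (l₀ - (l₀ - 1)) * (l₀ - y i) = 4 * (l₀ - y i) := by ring
        rw [he1]
        linarith
      refine lt_of_pow_lt_pow_left₀ 2 (norm_nonneg _) ?_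
      rw [hsq]; linarith
    have hzy : (0:ℝ) < ‖z - y‖ :=
      norm_pos_iff.mpr (sub_ne_zero.mpr (Ne.symm hyz))
    have hKlt : ‖z - R y‖ ^ e < ‖z - y‖ ^ e :=
      Real.rpow_lt_rpow_of_neg hzy hdist hneg
    have hnormR : ‖R y‖ ^ 2 < ‖y‖ ^ 2 := by
      have hsq : ‖R y‖ ^ 2 = ‖y‖ ^ 2 + ((2 * l₀ - y i) ^ 2 - y i ^ 2) := by
        rw [hRdef]; exact NoSymAux.reflect_norm_sq i l₀ y
      have he2 : (2 * l₀ - y i) ^ 2 - y i ^ 2 = 4 * l₀ * (l₀ - y i) := by ring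
      have he3 : 4 * l₀ * (l₀ - y i) < 0 :=
        mul_neg_of_neg_of_pos (by linarith) (by linarith)
      rw [hsq, he2]
      linarith
    have hclt : (1 + ‖y‖ ^ 2) ^ (-α) < (1 + ‖R y‖ ^ 2) ^ (-α) :=
      Real.rpow_lt_rpow_of_neg (by positivity) (by linarith) (by linarith)
    have hup : 0 < u y ^ p := Real.rpow_pos_of_pos (upos y) p
    have hexpand : F y + F (R y)
        = u y ^ p * ((‖z - y‖ ^ e - ‖z - R y‖ ^ e)
            * ((1 + ‖y‖ ^ 2) ^ (-α) - (1 + ‖R y‖ ^ 2) ^ (-α))) := by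
      rw [hFdef, hTdef]
      simp only
      rw [hRR y, ← hsymy]
      ring
    rw [hexpand]
    exact mul_neg_of_pos_of_neg hup
      (mul_neg_of_pos_of_neg (by linarith) (by linarith))
  -- a.e. contradiction
  have haez : ∀ᵐ y ∂(volume.restrict A), y ≠ z := by
    refine MeasureTheory.ae_iff.mpr ?_
    have hs : {y : EuclideanSpace ℝ (Fin n) | ¬ y ≠ z} = {z} := by
      ext y; simp
    rw [hs, Measure.restrict_apply (measurableSet_singleton z)]
    exact measure_mono_null Set.inter_subset_left (measure_singleton z)
  have hnn : 0 ≤ᵐ[volume.restrict A] fun y => -(F y + F (R y)) := by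
    filter_upwards [ae_restrict_mem hAmeas, haez] with y hyA hyz
    have := hkey y hyA hyz
    simp only [Pi.zero_apply]
    linarith
  have hGint : Integrable (fun y => -(F y + F (R y))) (volume.restrict A) :=
    ((hFint.integrableOn.add hFRint.integrableOn)).neg
  have hae0 : (fun y => -(F y + F (R y))) =ᵐ[volume.restrict A] 0 := by
    rw [← integral_eq_zero_iff_of_nonneg_ae hnn hGint]
    rw [integral_neg]
    rw [hsum0]
    simp
  have hfalse : ∀ᵐ y ∂(volume.restrict A), False := by
    filter_upwards [hae0, ae_restrict_mem hAmeas, haez] with y h0 hyA hyz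
    have h1 := hkey y hyA hyz
    simp only [Pi.zero_apply] at h0
    linarith [h0]
  have hA0 : volume A = 0 := by
    have := MeasureTheory.ae_iff.mp hfalse
    simpa [Measure.restrict_apply, MeasurableSet.univ] using this
  have hApos : 0 < volume A := hAopen.measure_pos volume ⟨z, hzA⟩
  rw [hA0] at hApos
  exact lt_irrefl _ hApos
end
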